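/- arXiv:1110.0938 — 2 statements merged into one kernel-verified Lean document; each statement's English description precedes it below -/
import Mathlib

section
/- For every smooth power function p and every n, there exists a set X of n collinear points in ℝ² with the following property: if L is any set of links with endpoints in X such that every point of X is an endpoint of at least one link of L, then any partition of L into sets that are each SINR-feasible under the oblivious power assignment P_ℓ = p(ℓ) (where additionally each point appears in at most one link per set, reflecting half-duplex operation) must have at least n/2 parts. -/
open scoped Classical
noncomputable section

/-- A point in the Euclidean plane. -/
abbrev Point : Type := EuclideanSpace ℝ (Fin 2)

/-- A link is an ordered pair (sender, receiver) of points. -/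
abbrev Link : Type := Point × Point

/-- The length of a link: the distance from its sender to its receiver. -/
def linkLen (l : Link) : ℝ := dist l.1 l.2

/-- The set `S` of links satisfies all the SINR constraints under the power
assignment `Pw` (path-loss exponent `α`, SINR threshold `β`, noise ignored). -/
def FeasibleWith (α β : ℝ) (S : Finset Link) (Pw : Link → ℝ) : Prop :=
  ∀ l ∈ S, β * ∑ l' ∈ S.erase l, Pw l' / dist l'.1 l.2 ^ α ≤ Pw l / linkLen l ^ α

/-- A set of links is feasible if some positive power assignment satisfies all
its SINR constraints. -/
def Feasible (α β : ℝ) (S : Finset Link) : Prop :=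
  ∃ Pw : Link → ℝ, (∀ l ∈ S, 0 < Pw l) ∧ FeasibleWith α β S Pw

/-- `S` is a partition of the link set `L` into `k` (possibly empty) sets. -/
def IsPartition (L : Finset Link) {k : ℕ} (S : Fin k → Finset Link) : Prop :=
  (∀ i, S i ⊆ L) ∧ (∀ l ∈ L, ∃ i, l ∈ S i) ∧
    ∀ i j : Fin k, i ≠ j → Disjoint (S i) (S j)

/-- Total Euclidean edge length of a graph on the point set `P`. -/
def treeWeight (P : Finset Point) (T : SimpleGraph ↥P) : ℝ :=
  (1 / 2) * ∑ p ∈ P.attach, ∑ q ∈ P.attach,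
    if T.Adj p q then dist (p : Point) (q : Point) else 0

/-- `T` is a minimum spanning tree of `P`: a spanning tree of the complete
graph on `P` of minimum total Euclidean edge length. -/
def IsMST (P : Finset Point) (T : SimpleGraph ↥P) : Prop :=
  T.IsTree ∧ ∀ T' : SimpleGraph ↥P, T'.IsTree → treeWeight P T ≤ treeWeight P T'

/-- `L` is an orientation of the edges of `T` into links: every link of `L`
is an oriented edge of `T`, and every edge of `T` appears in exactly one of
its two orientations. -/
def IsOrientationOf (P : Finset Point) (T : SimpleGraph ↥P) (L : Finset Link) : Prop :=
  (∀ l ∈ L, ∃ p q : ↥P, T.Adj p q ∧ l = ((p : Point), (q : Point))) ∧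
  (∀ p q : ↥P, T.Adj p q →
    (((p : Point), (q : Point)) ∈ L ∨ ((q : Point), (p : Point)) ∈ L)) ∧
  (∀ p q : ↥P, T.Adj p q →
    ¬((((p : Point), (q : Point)) ∈ L) ∧ (((q : Point), (p : Point)) ∈ L)))

/-- The point `(r, 0)` on the x-axis of the Euclidean plane. -/
def ptOnLine (r : ℝ) : Point := (EuclideanSpace.equiv (Fin 2) ℝ).symm ![r, 0]

/-- `g(x) = (1/2)·min(p(x), x^α/p(x))`. -/
def gfun (α : ℝ) (p : ℝ → ℝ) (x : ℝ) : ℝ := (1 / 2) * min (p x) (x ^ α / p x)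

/-- A power function `p` is smooth if `p(x) ≥ x`, `p` is nondecreasing,
`p(x) ≤ x^α`, and `g(x) = (1/2)·min(p(x), x^α/p(x))` is monotone increasing
and tends to infinity. -/
def SmoothPower (α : ℝ) (p : ℝ → ℝ) : Prop :=
  (∀ x, 0 < x → 0 < p x) ∧
  (∀ x, 0 < x → x ≤ p x) ∧
  (∀ x y, 0 < x → x ≤ y → p x ≤ p y) ∧
  (∀ x, 0 < x → p x ≤ x ^ α) ∧
  StrictMonoOn (gfun α p) (Set.Ioi (0 : ℝ)) ∧
  Filter.Tendsto (gfun α p) Filter.atTop Filter.atTop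

lemma dist_ptOnLine (a b : ℝ) : dist (ptOnLine a) (ptOnLine b) = |a - b| := by
  rw [EuclideanSpace.dist_eq]
  simp [ptOnLine, Fin.sum_univ_two, Real.dist_eq, Real.sqrt_sq_eq_abs]

lemma core_aux {α : ℝ} {p : ℝ → ℝ}
    (hp0 : ∀ x, 0 < x → 0 < p x) (hp1 : ∀ x, 0 < x → x ≤ p x)
    (hp3 : ∀ x, 0 < x → p x ≤ x ^ α)
    {x x' d : ℝ} (hx : 1 ≤ x) (hx' : 1 ≤ x') (hd : 0 < d)
    (h : p x' / d ^ α ≤ p x / x ^ α) :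
    2 * gfun α p x ≤ d ^ α ∧ 2 * gfun α p x' ≤ d ^ α := by
  have hx0 : (0:ℝ) < x := lt_of_lt_of_le one_pos hx
  have hx'0 : (0:ℝ) < x' := lt_of_lt_of_le one_pos hx'
  have hxα : 0 < x ^ α := Real.rpow_pos_of_pos hx0 α
  have hdα : 0 < d ^ α := Real.rpow_pos_of_pos hd α
  have hpx : 0 < p x := hp0 x hx0
  have hpx' : 0 < p x' := hp0 x' hx'0
  have hkey : p x' * x ^ α ≤ p x * d ^ α := by
    rw [div_le_div_iff₀ hdα hxα] at h; linarith
  have h2g : ∀ y, 2 * gfun α p y = min (p y) (y ^ α / p y) := by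
    intro y; rw [gfun]; ring
  constructor
  · have hx'1 : 1 ≤ p x' := le_trans hx' (hp1 x' hx'0)
    have h1 : x ^ α ≤ p x * d ^ α := le_trans (by nlinarith) hkey
    have h2 : x ^ α / p x ≤ d ^ α := by rw [div_le_iff₀ hpx]; linarith [mul_comm (p x) (d ^ α)]
    rw [h2g]
    exact le_trans (min_le_right _ _) h2
  · have h1 : p x' * x ^ α ≤ d ^ α * x ^ α := by nlinarith [hp3 x hx0]
    have h2 : p x' ≤ d ^ α := le_of_mul_le_mul_right h1 hxα
    rw [h2g]
    exact le_trans (min_le_left _ _) h2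

/-- for every smooth power function `p` and every `n` there are
`n` collinear points such that any structure of links covering every point,
partitioned into sets that are SINR-feasible under the oblivious power
assignment `P_ℓ = p(ℓ)` (with each point in at most one link per set,
reflecting half-duplex operation), needs at least `n/2` parts. -/
theorem smooth_oblivious_power_needs_linear_slots (α β : ℝ)
    (hα : 2 < α) (hβ : 1 ≤ β) (p : ℝ → ℝ) (hp : SmoothPower α p) (n : ℕ) :
    ∃ X : Finset Point, X.card = n ∧ Collinear ℝ (X : Set Point) ∧
      ∀ L : Finset Link,
        (∀ l ∈ L, l.1 ∈ X ∧ l.2 ∈ X ∧ l.1 ≠ l.2) →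
        (∀ x ∈ X, ∃ l ∈ L, x = l.1 ∨ x = l.2) →
        ∀ (k : ℕ) (S : Fin k → Finset Link), IsPartition L S →
          (∀ i, FeasibleWith α β (S i) (fun l => p (linkLen l))) →
          (∀ i, ∀ l ∈ S i, ∀ l' ∈ S i, l ≠ l' →
            l.1 ≠ l'.1 ∧ l.1 ≠ l'.2 ∧ l.2 ≠ l'.1 ∧ l.2 ≠ l'.2) →
          (n : ℝ) / 2 ≤ (k : ℝ) := by
  obtain ⟨hp0, hp1, hp2, hp3, hgmono, hgtend⟩ := hp
  have hα0 : (0:ℝ) < α := by linarith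
  have hstepex : ∀ C : ℝ, ∃ x : ℝ, 1 ≤ x ∧ C ^ α < 2 * gfun α p x := by
    intro C
    obtain ⟨x, hgx, hx1⟩ :=
      ((hgtend.eventually_gt_atTop (C ^ α / 2)).and (Filter.eventually_ge_atTop 1)).exists
    exact ⟨x, hx1, by linarith⟩
  choose step hstep1 hstep2 using hstepex
  set t : ℕ → ℝ := fun m => Nat.rec 0 (fun _ a => a + step a) m with htdef
  have htsucc : ∀ m, t (m+1) = t m + step (t m) := fun m => rfl
  have ht0 : t 0 = 0 := rfl
  have htmono : StrictMono t := strictMono_nat_of_lt_succ (fun m => by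
    rw [htsucc]; linarith [hstep1 (t m)])
  have htnonneg : ∀ m, 0 ≤ t m := by
    intro m
    induction m with
    | zero => simp [ht0]
    | succ m ih => rw [htsucc]; linarith [hstep1 (t m)]
  have htgap : ∀ u v : ℕ, u < v → t u + 1 ≤ t v := by
    intro u v huv
    have h1 : t u + 1 ≤ t (u+1) := by rw [htsucc]; linarith [hstep1 (t u)]
    exact h1.trans (htmono.monotone huv)
  set P : ℕ → Point := fun m => ptOnLine (t m) with hPdef
  have hdistP : ∀ u v, dist (P u) (P v) = |t u - t v| := fun u v => dist_ptOnLine _ _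
  have hPinj : Function.Injective P := by
    intro u v h
    by_contra huv
    have h1 : 1 ≤ |t u - t v| := by
      rcases Ne.lt_or_gt huv with h' | h'
      · have := htgap u v h'
        rw [abs_sub_comm, abs_of_nonneg (by linarith)]; linarith
      · have := htgap v u h'
        rw [abs_of_nonneg (by linarith)]; linarith
    have h2 : dist (P u) (P v) = 0 := by rw [h, dist_self]
    rw [hdistP] at h2
    linarith
  refine ⟨(Finset.range n).image P, ?_, ?_, ?_⟩
  · rw [Finset.card_image_of_injective _ hPinj, Finset.card_range]
  · rw [collinear_iff_exists_forall_eq_smul_vadd]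
    refine ⟨ptOnLine 0, ptOnLine 1, ?_⟩
    intro x hx
    simp only [Finset.coe_image, Set.mem_image] at hx
    obtain ⟨m, -, rfl⟩ := hx
    refine ⟨t m, ?_⟩
    show P m = t m • ptOnLine 1 + ptOnLine 0
    ext i
    fin_cases i <;> simp [hPdef, ptOnLine]
  · intro L hL hcover k S hpart hfeas hhalf
    obtain ⟨hsub, hcov, hdisj⟩ := hpart
    have habs1 : ∀ u v : ℕ, u ≠ v → 1 ≤ |t u - t v| := by
      intro u v h
      rcases Ne.lt_or_gt h with h' | h'
      · have := htgap u v h'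
        rw [abs_sub_comm, abs_of_nonneg (by linarith)]; linarith
      · have := htgap v u h'
        rw [abs_of_nonneg (by linarith)]; linarith
    -- each part has at most one link
    have hcard1 : ∀ i, (S i).card ≤ 1 := by
      intro i
      rw [Finset.card_le_one]
      intro l hl l' hl'
      by_contra hne
      obtain ⟨hne1, hne2, hne3, hne4⟩ := hhalf i l hl l' hl' hne
      obtain ⟨hX1, hX2, hne12⟩ := hL l (hsub i hl)
      obtain ⟨hX3, hX4, hne34⟩ := hL l' (hsub i hl')
      obtain ⟨a, -, ha⟩ := Finset.mem_image.mp hX1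
      obtain ⟨b, -, hb⟩ := Finset.mem_image.mp hX2
      obtain ⟨c, -, hc⟩ := Finset.mem_image.mp hX3
      obtain ⟨d, -, hd⟩ := Finset.mem_image.mp hX4
      have hidx : ∀ u v : ℕ, ∀ x y : Point, P u = x → P v = y → x ≠ y → u ≠ v := by
        intro u v x y hu hv hxy huv
        exact hxy (by rw [← hu, ← hv, huv])
      have hab : a ≠ b := hidx a b _ _ ha hb hne12
      have hcd : c ≠ d := hidx c d _ _ hc hd hne34
      have hac : a ≠ c := hidx a c _ _ ha hc hne1
      have had : a ≠ d := hidx a d _ _ ha hd hne2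
      have hbc : b ≠ c := hidx b c _ _ hb hc hne3
      have hbd : b ≠ d := hidx b d _ _ hb hd hne4
      set M := max (max a b) (max c d) with hMdef
      have hMa : a ≤ M := by omega
      have hMb : b ≤ M := by omega
      have hMc : c ≤ M := by omega
      have hMd : d ≤ M := by omega
      have hM0 : M ≠ 0 := by omega
      set m := M - 1 with hmdef
      have hM : M = m + 1 := by omega
      -- bounds for points below the top
      have habs2 : ∀ u v : ℕ, u ≤ m → v ≤ m → |t u - t v| ≤ t m := by
        intro u v hu hv
        rw [abs_sub_le_iff]
        constructor <;>
          linarith [htnonneg u, htnonneg v, htmono.monotone hu, htmono.monotone hv]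
      have habs3 : ∀ u : ℕ, u ≤ m → step (t m) ≤ |t (m+1) - t u| := by
        intro u hu
        have h1 : t u ≤ t m := htmono.monotone hu
        rw [htsucc, abs_of_nonneg (by linarith [hstep1 (t m)])]
        linarith
      -- single-interferer SINR consequence
      have hterm : ∀ u v : Link, u ∈ S i → v ∈ S i → v ≠ u →
          p (linkLen v) / dist v.1 u.2 ^ α ≤ p (linkLen u) / linkLen u ^ α := by
        intro u v hu hv hvu
        have hfu := hfeas i u hu
        have hnn : ∀ w ∈ (S i).erase u,
            0 ≤ p (linkLen w) / dist w.1 u.2 ^ α := by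
          intro w hw
          have hwL := hL w (hsub i (Finset.mem_of_mem_erase hw))
          have hw0 : 0 < linkLen w := dist_pos.mpr hwL.2.2
          exact div_nonneg (le_of_lt (hp0 _ hw0)) (Real.rpow_nonneg dist_nonneg α)
        have h1 : p (linkLen v) / dist v.1 u.2 ^ α ≤
            ∑ w ∈ (S i).erase u, p (linkLen w) / dist w.1 u.2 ^ α :=
          Finset.single_le_sum hnn (Finset.mem_erase.mpr ⟨hvu, hv⟩)
        have hsum0 : 0 ≤ ∑ w ∈ (S i).erase u, p (linkLen w) / dist w.1 u.2 ^ α :=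
          Finset.sum_nonneg hnn
        calc p (linkLen v) / dist v.1 u.2 ^ α
            ≤ ∑ w ∈ (S i).erase u, p (linkLen w) / dist w.1 u.2 ^ α := h1
          _ ≤ β * ∑ w ∈ (S i).erase u, p (linkLen w) / dist w.1 u.2 ^ α :=
              le_mul_of_one_le_left hsum0 hβ
          _ ≤ p (linkLen u) / linkLen u ^ α := hfu
      -- the key contradiction machine
      have key : ∀ x x' D : ℝ, 1 ≤ x → 1 ≤ x' → 0 < D → D ≤ t m →
          (step (t m) ≤ x ∨ step (t m) ≤ x') →
          p x' / D ^ α ≤ p x / x ^ α → False := by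
        intro x x' D hx hx' hD hDm hlong hcons
        obtain ⟨hg1, hg2⟩ := core_aux hp0 hp1 hp3 hx hx' hD hcons
        have hs0 : (0:ℝ) < step (t m) := lt_of_lt_of_le one_pos (hstep1 (t m))
        have hDα : D ^ α ≤ t m ^ α := Real.rpow_le_rpow hD.le hDm (le_of_lt hα0)
        have hmain : t m ^ α < 2 * gfun α p (step (t m)) := hstep2 (t m)
        have hgm := hgmono.monotoneOn
        rcases hlong with hx_ | hx_
        · have : gfun α p (step (t m)) ≤ gfun α p x :=
            hgm (Set.mem_Ioi.mpr hs0) (Set.mem_Ioi.mpr (lt_of_lt_of_le one_pos hx)) hx_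
          linarith
        · have : gfun α p (step (t m)) ≤ gfun α p x' :=
            hgm (Set.mem_Ioi.mpr hs0) (Set.mem_Ioi.mpr (lt_of_lt_of_le one_pos hx')) hx_
          linarith
      -- lengths and distances in coordinates
      have hlenl : linkLen l = |t a - t b| := by
        rw [linkLen, ← ha, ← hb, hdistP]
      have hlenl' : linkLen l' = |t c - t d| := by
        rw [linkLen, ← hc, ← hd, hdistP]
      have hdcb : dist l'.1 l.2 = |t c - t b| := by rw [← hc, ← hb, hdistP]
      have hdad : dist l.1 l'.2 = |t a - t d| := by rw [← ha, ← hd, hdistP]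
      have hlenl1 : 1 ≤ linkLen l := by rw [hlenl]; exact habs1 a b hab
      have hlenl'1 : 1 ≤ linkLen l' := by rw [hlenl']; exact habs1 c d hcd
      have hcases : M = a ∨ M = b ∨ M = c ∨ M = d := by omega
      rcases hcases with hCase | hCase | hCase | hCase
      · -- top point is l.1 (sender of l); use constraint for l, interferer l'
        have hb' : b ≤ m := by omega
        have hc' : c ≤ m := by omega
        have hd' : d ≤ m := by omega
        refine key (linkLen l) (linkLen l') (dist l'.1 l.2) hlenl1 hlenl'1
          ?_ ?_ (Or.inl ?_) (hterm l l' hl hl' (Ne.symm hne))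
        · rw [hdcb]; linarith [habs1 c b hbc.symm]
        · rw [hdcb]; exact habs2 c b hc' hb'
        · rw [hlenl]
          have : a = m + 1 := by omega
          rw [this]
          exact habs3 b hb'
      · -- top point is l.2 (receiver of l); use constraint for l', interferer l
        have ha' : a ≤ m := by omega
        have hc' : c ≤ m := by omega
        have hd' : d ≤ m := by omega
        refine key (linkLen l') (linkLen l) (dist l.1 l'.2) hlenl'1 hlenl1
          ?_ ?_ (Or.inr ?_) (hterm l' l hl' hl hne)
        · rw [hdad]; linarith [habs1 a d had]
        · rw [hdad]; exact habs2 a d ha' hd'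
        · rw [hlenl, abs_sub_comm]
          have : b = m + 1 := by omega
          rw [this]
          exact habs3 a ha'
      · -- top point is l'.1
        have ha' : a ≤ m := by omega
        have hb' : b ≤ m := by omega
        have hd' : d ≤ m := by omega
        refine key (linkLen l') (linkLen l) (dist l.1 l'.2) hlenl'1 hlenl1
          ?_ ?_ (Or.inl ?_) (hterm l' l hl' hl hne)
        · rw [hdad]; linarith [habs1 a d had]
        · rw [hdad]; exact habs2 a d ha' hd'
        · rw [hlenl']
          have : c = m + 1 := by omega
          rw [this]
          exact habs3 d hd'
      · -- top point is l'.2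
        have ha' : a ≤ m := by omega
        have hb' : b ≤ m := by omega
        have hc' : c ≤ m := by omega
        refine key (linkLen l) (linkLen l') (dist l'.1 l.2) hlenl1 hlenl'1
          ?_ ?_ (Or.inr ?_) (hterm l l' hl hl' (Ne.symm hne))
        · rw [hdcb]; linarith [habs1 c b hbc.symm]
        · rw [hdcb]; exact habs2 c b hc' hb'
        · rw [hlenl', abs_sub_comm]
          have : d = m + 1 := by omega
          rw [this]
          exact habs3 c hc'
    -- counting
    have hLk : L.card ≤ k := by
      have hsubU : L ⊆ Finset.univ.biUnion S := by
        intro l hl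
        obtain ⟨i, hi⟩ := hcov l hl
        exact Finset.mem_biUnion.mpr ⟨i, Finset.mem_univ i, hi⟩
      calc L.card ≤ (Finset.univ.biUnion S).card := Finset.card_le_card hsubU
        _ ≤ ∑ i, (S i).card := Finset.card_biUnion_le
        _ ≤ ∑ _i : Fin k, 1 := Finset.sum_le_sum (fun i _ => hcard1 i)
        _ = k := by simp
    have hnL : n ≤ 2 * L.card := by
      have hsubX : (Finset.range n).image P ⊆ L.biUnion (fun l => {l.1, l.2}) := by
        intro x hx
        obtain ⟨l, hlL, hxl⟩ := hcover x hx
        refine Finset.mem_biUnion.mpr ⟨l, hlL, ?_⟩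
        rcases hxl with h | h <;> simp [h]
      calc n = ((Finset.range n).image P).card := by
            rw [Finset.card_image_of_injective _ hPinj, Finset.card_range]
        _ ≤ (L.biUnion (fun l => {l.1, l.2})).card := Finset.card_le_card hsubX
        _ ≤ ∑ l ∈ L, ({l.1, l.2} : Finset Point).card := Finset.card_biUnion_le
        _ ≤ ∑ _l ∈ L, 2 := Finset.sum_le_sum (fun l _ => Finset.card_insert_le _ _)
        _ = 2 * L.card := by rw [Finset.sum_const, smul_eq_mul, mul_comm]
    have hnk : n ≤ 2 * k := le_trans hnL (by omega)
    rw [div_le_iff₀ (by norm_num : (0:ℝ) < 2)]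
    exact_mod_cast (by omega : n ≤ k * 2)
end
end

section
/- There is a constant c = c(α, β) such that for every finite point set P ⊆ ℝ² whose minimum spanning tree edges all have length at least 1, any orientation of the MST into links can be partitioned into at most c·g sets, each of which satisfies the SINR constraints when all links are assigned one common power (uniform power). Here g = |{⌈log₂ ℓ⌉ : ℓ an edge length of the MST}| is the length diversity; in particular at most c·(1 + log₂ Δ) slots suffice, where Δ is the ratio of the longest to the shortest MST edge length. -/
open scoped Classical
noncomputable section

lemma abs_coord_le (x y : Point) (i : Fin 2) : |x i - y i| ≤ dist x y := by
  rw [EuclideanSpace.dist_eq, ← Real.dist_eq]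
  have h1 : dist (x i) (y i) = Real.sqrt (dist (x i) (y i) ^ 2) :=
    (Real.sqrt_sq dist_nonneg).symm
  rw [h1]
  apply Real.sqrt_le_sqrt
  exact Finset.single_le_sum (f := fun j => dist (x j) (y j) ^ 2)
    (fun j _ => sq_nonneg _) (Finset.mem_univ i)

lemma dist_lt_of_cell {h : ℝ} (hh : 0 < h) {x y : Point}
    (h0 : ⌊x 0 / h⌋ = ⌊y 0 / h⌋) (h1 : ⌊x 1 / h⌋ = ⌊y 1 / h⌋) :
    dist x y < Real.sqrt 2 * h := by
  have key : ∀ i : Fin 2, ⌊x i / h⌋ = ⌊y i / h⌋ → dist (x i) (y i) < h := by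
    intro i hi
    have := Int.abs_sub_lt_one_of_floor_eq_floor hi
    rw [div_sub_div_same, abs_div, abs_of_pos hh, div_lt_one hh] at this
    rwa [Real.dist_eq]
  have k0 := key 0 h0
  have k1 := key 1 h1
  rw [EuclideanSpace.dist_eq]
  have hsum : (∑ i : Fin 2, dist (x i) (y i) ^ 2) < 2 * h ^ 2 := by
    rw [Fin.sum_univ_two]
    have a0 : dist (x 0) (y 0) ^ 2 < h ^ 2 := by
      apply sq_lt_sq' (by linarith [dist_nonneg (x := x 0) (y := y 0)]) k0
    have a1 : dist (x 1) (y 1) ^ 2 < h ^ 2 := by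
      apply sq_lt_sq' (by linarith [dist_nonneg (x := x 1) (y := y 1)]) k1
    linarith
  calc Real.sqrt (∑ i : Fin 2, dist (x i) (y i) ^ 2)
      < Real.sqrt (2 * h ^ 2) := by
        apply Real.sqrt_lt_sqrt (Finset.sum_nonneg fun i _ => sq_nonneg _) hsum
    _ = Real.sqrt 2 * h := by
        rw [Real.sqrt_mul (by norm_num), Real.sqrt_sq hh.le]

lemma cellbox_card (w : Point) (r h : ℝ) (hh : 0 < h) (C : Finset (ℤ × ℤ))
    (hC : ∀ c ∈ C, ∃ x : Point, dist x w ≤ r ∧ c = (⌊x 0 / h⌋, ⌊x 1 / h⌋)) :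
    (C.card : ℝ) ≤ (2 * r / h + 2) ^ 2 := by
  rcases C.eq_empty_or_nonempty with rfl | ⟨c0, hc0⟩
  · simpa using sq_nonneg (2 * r / h + 2)
  have hr : 0 ≤ r := by
    obtain ⟨x, hx, _⟩ := hC c0 hc0
    exact le_trans dist_nonneg hx
  set a0 : ℤ := ⌊(w 0 - r) / h⌋
  set b0 : ℤ := ⌊(w 0 + r) / h⌋
  set a1 : ℤ := ⌊(w 1 - r) / h⌋
  set b1 : ℤ := ⌊(w 1 + r) / h⌋
  have hsub : C ⊆ Finset.Icc a0 b0 ×ˢ Finset.Icc a1 b1 := by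
    intro c hc
    obtain ⟨x, hx, rfl⟩ := hC c hc
    have key : ∀ i : Fin 2, ⌊(w i - r) / h⌋ ≤ ⌊x i / h⌋ ∧ ⌊x i / h⌋ ≤ ⌊(w i + r) / h⌋ := by
      intro i
      have habs := abs_coord_le x w i
      have h2 : |x i - w i| ≤ r := le_trans habs hx
      rw [abs_le] at h2
      constructor
      · exact Int.floor_le_floor (by apply div_le_div_of_nonneg_right _ hh.le; linarith [h2.2] : (w i - r) / h ≤ x i / h)
      · exact Int.floor_le_floor (by apply div_le_div_of_nonneg_right _ hh.le; linarith [h2.1] : x i / h ≤ (w i + r) / h)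
    rw [Finset.mem_product, Finset.mem_Icc, Finset.mem_Icc]
    exact ⟨⟨(key 0).1, (key 0).2⟩, ⟨(key 1).1, (key 1).2⟩⟩
  have hcard := Finset.card_le_card hsub
  rw [Finset.card_product] at hcard
  have hdim : ∀ (a b : ℤ) (i : Fin 2), a = ⌊(w i - r) / h⌋ → b = ⌊(w i + r) / h⌋ →
      ((Finset.Icc a b).card : ℝ) ≤ 2 * r / h + 2 := by
    intro a b i ha hb
    rw [Int.card_Icc]
    have hbnd : (b : ℝ) + 1 - a ≤ 2 * r / h + 2 := by
      have h1 : (b : ℝ) ≤ (w i + r) / h := hb ▸ Int.floor_le _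
      have h2 : (w i - r) / h - 1 < (a : ℝ) := by
        rw [ha]; linarith [Int.lt_floor_add_one ((w i - r) / h)]
      have : (w i + r) / h - (w i - r) / h = 2 * r / h := by ring
      linarith
    rcases le_or_gt (b + 1 - a) 0 with hle | hlt
    · rw [Int.toNat_of_nonpos hle]
      have : (0:ℝ) ≤ 2 * r / h + 2 := by positivity
      simpa using this
    · have hcast : (((b + 1 - a).toNat : ℤ) : ℝ) = ((b + 1 - a : ℤ) : ℝ) := by
        exact_mod_cast congrArg Int.cast (Int.toNat_of_nonneg hlt.le)
      push_cast at hcast ⊢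
      rw [hcast]
      linarith
  have e0 := hdim a0 b0 0 rfl rfl
  have e1 := hdim a1 b1 1 rfl rfl
  calc (C.card : ℝ) ≤ ((Finset.Icc a0 b0).card : ℝ) * ((Finset.Icc a1 b1).card : ℝ) := by
        exact_mod_cast hcard
    _ ≤ (2 * r / h + 2) * (2 * r / h + 2) := by
        apply mul_le_mul e0 e1 (by positivity) (by positivity)
    _ = (2 * r / h + 2) ^ 2 := (sq _).symm

lemma grid_card (z : Point) (r h s : ℝ) (hh : 0 < h) (hs : Real.sqrt 2 * h ≤ s)
    (S : Finset Point) (hb : ∀ x ∈ S, dist x z ≤ r)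
    (hsep : ∀ x ∈ S, ∀ y ∈ S, x ≠ y → s ≤ dist x y) :
    (S.card : ℝ) ≤ (2 * r / h + 2) ^ 2 := by
  set f : Point → ℤ × ℤ := fun x => (⌊x 0 / h⌋, ⌊x 1 / h⌋) with hf
  have hinj : Set.InjOn f S := by
    intro x hx y hy hxy
    by_contra hne
    have h1 := dist_lt_of_cell hh (congrArg Prod.fst hxy) (congrArg Prod.snd hxy)
    have := hsep x hx y hy hne
    linarith
  have hcard : S.card = (S.image f).card := (Finset.card_image_of_injOn hinj).symm
  rw [hcard]
  apply cellbox_card z r h hh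
  intro c hc
  rw [Finset.mem_image] at hc
  obtain ⟨x, hx, rfl⟩ := hc
  exact ⟨x, hb x hx, rfl⟩

lemma interference (α : ℝ) (hα : 2 < α) (y : Point) (R : ℝ) (hR : 0 < R) (S : Finset Point)
    (hsep : ∀ x ∈ S, ∀ x' ∈ S, x ≠ x' → R ≤ dist x x')
    (hfar : ∀ x ∈ S, R ≤ dist y x) :
    ∑ x ∈ S, 1 / dist y x ^ α ≤ (256 * (1 - (2:ℝ) ^ (2 - α))⁻¹) / R ^ α := by
  set q : ℝ := (2:ℝ) ^ (2 - α) with hqdef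
  have hq0 : 0 < q := Real.rpow_pos_of_pos two_pos _
  have hq1 : q < 1 := Real.rpow_lt_one_of_one_lt_of_neg one_lt_two (by linarith)
  have hα0 : 0 < α := by linarith
  set J : Point → ℕ := fun x => ⌊Real.logb 2 (dist y x / R)⌋₊ with hJdef
  -- dyadic bounds
  have hJb : ∀ x ∈ S, (2:ℝ) ^ (J x : ℝ) * R ≤ dist y x ∧
      dist y x ≤ (2:ℝ) ^ ((J x : ℝ) + 1) * R := by
    intro x hx
    have hdx : 0 < dist y x := lt_of_lt_of_le hR (hfar x hx)
    have hrat : 1 ≤ dist y x / R := (one_le_div hR).mpr (hfar x hx)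
    have hlogb : 0 ≤ Real.logb 2 (dist y x / R) := Real.logb_nonneg one_lt_two hrat
    have hfl : (J x : ℝ) ≤ Real.logb 2 (dist y x / R) := Nat.floor_le hlogb
    have hfu : Real.logb 2 (dist y x / R) < (J x : ℝ) + 1 := Nat.lt_floor_add_one _
    have hratpos : 0 < dist y x / R := by positivity
    constructor
    · have h1 : (2:ℝ) ^ (J x : ℝ) ≤ (2:ℝ) ^ Real.logb 2 (dist y x / R) :=
        Real.rpow_le_rpow_of_exponent_le one_le_two hfl
      rw [Real.rpow_logb two_pos (by norm_num) hratpos] at h1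
      calc (2:ℝ) ^ (J x : ℝ) * R ≤ (dist y x / R) * R := by
            apply mul_le_mul_of_nonneg_right h1 hR.le
        _ = dist y x := by field_simp
    · have h1 : (2:ℝ) ^ Real.logb 2 (dist y x / R) ≤ (2:ℝ) ^ ((J x : ℝ) + 1) :=
        Real.rpow_le_rpow_of_exponent_le one_le_two hfu.le
      rw [Real.rpow_logb two_pos (by norm_num) hratpos] at h1
      calc dist y x = (dist y x / R) * R := by field_simp
        _ ≤ (2:ℝ) ^ ((J x : ℝ) + 1) * R := mul_le_mul_of_nonneg_right h1 hR.le
  -- fiberwise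
  rw [← Finset.sum_fiberwise_of_maps_to (t := S.image J)
      (fun x hx => Finset.mem_image_of_mem J hx) (fun x => 1 / dist y x ^ α)]
  have hfiber : ∀ j ∈ S.image J,
      ∑ x ∈ S.filter (fun x => J x = j), 1 / dist y x ^ α ≤ (256 / R ^ α) * q ^ j := by
    intro j _
    set F := S.filter (fun x => J x = j) with hF
    have hFsub : F ⊆ S := Finset.filter_subset _ _
    have hcard : (F.card : ℝ) ≤ ((2:ℝ) ^ ((j:ℝ) + 4)) ^ 2 := by
      have hb : ∀ x ∈ F, dist x y ≤ (2:ℝ) ^ ((j:ℝ) + 1) * R := by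
        intro x hx
        rw [Finset.mem_filter] at hx
        rw [dist_comm]
        have := (hJb x hx.1).2
        rwa [hx.2] at this
      have hgc := grid_card y ((2:ℝ) ^ ((j:ℝ) + 1) * R) (R / 2) R (by positivity)
        (by nlinarith [Real.sq_sqrt (by norm_num : (2:ℝ) ≥ 0).le, Real.sqrt_nonneg 2,
          Real.sqrt_lt_sqrt (by norm_num : (0:ℝ) ≤ 2) (by norm_num : (2:ℝ) < 4)])
        F hb (fun x hx x' hx' hne => hsep x (hFsub hx) x' (hFsub hx') hne)
      refine le_trans hgc ?_
      have hX : (2:ℝ) ^ ((j:ℝ) + 3) = 4 * (2:ℝ) ^ ((j:ℝ) + 1) := by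
        rw [show ((j:ℝ) + 3) = ((j:ℝ) + 1) + 2 from by ring, Real.rpow_add two_pos]
        rw [show (2:ℝ) ^ (2:ℝ) = 4 from by
          rw [show (2:ℝ) = ((2:ℕ):ℝ) from by norm_num, Real.rpow_natCast]; norm_num]
        ring
      have h2 : 2 * ((2:ℝ) ^ ((j:ℝ) + 1) * R) / (R / 2) + 2 = (2:ℝ) ^ ((j:ℝ) + 3) + 2 := by
        rw [hX]
        field_simp
        ring
      rw [h2]
      have h3 : (2:ℝ) ^ ((j:ℝ) + 3) + 2 ≤ (2:ℝ) ^ ((j:ℝ) + 4) := by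
        have e1 : (2:ℝ) ≤ (2:ℝ) ^ ((j:ℝ) + 3) := by
          calc (2:ℝ) = (2:ℝ) ^ (1:ℝ) := (Real.rpow_one 2).symm
          _ ≤ _ := Real.rpow_le_rpow_of_exponent_le one_le_two (by linarith [Nat.cast_nonneg (α := ℝ) j])
        have e2 : (2:ℝ) ^ ((j:ℝ) + 4) = 2 * (2:ℝ) ^ ((j:ℝ) + 3) := by
          rw [show ((j:ℝ) + 4) = 1 + ((j:ℝ) + 3) from by ring, Real.rpow_add two_pos,
            Real.rpow_one]
        linarith
      have h4 : (0:ℝ) ≤ (2:ℝ) ^ ((j:ℝ) + 3) + 2 := by positivity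
      exact pow_le_pow_left₀ h4 h3 2
    have hterm : ∀ x ∈ F, 1 / dist y x ^ α ≤ 1 / ((2:ℝ) ^ (j:ℝ) * R) ^ α := by
      intro x hx
      rw [Finset.mem_filter] at hx
      have hlow := (hJb x hx.1).1
      rw [hx.2] at hlow
      have hp : (0:ℝ) < (2:ℝ) ^ (j:ℝ) * R := by positivity
      apply one_div_le_one_div_of_le (Real.rpow_pos_of_pos hp α)
      exact Real.rpow_le_rpow hp.le hlow hα0.le
    calc ∑ x ∈ F, 1 / dist y x ^ α ≤ ∑ _x ∈ F, 1 / ((2:ℝ) ^ (j:ℝ) * R) ^ α :=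
          Finset.sum_le_sum hterm
      _ = (F.card : ℝ) * (1 / ((2:ℝ) ^ (j:ℝ) * R) ^ α) := by
          rw [Finset.sum_const, nsmul_eq_mul]
      _ ≤ ((2:ℝ) ^ ((j:ℝ) + 4)) ^ 2 * (1 / ((2:ℝ) ^ (j:ℝ) * R) ^ α) := by
          apply mul_le_mul_of_nonneg_right hcard (by positivity)
      _ = (256 / R ^ α) * q ^ j := by
          have e1 : ((2:ℝ) ^ ((j:ℝ) + 4)) ^ 2 = (2:ℝ) ^ (2 * (j:ℝ) + 8) := by
            rw [← Real.rpow_natCast ((2:ℝ) ^ ((j:ℝ) + 4)) 2, ← Real.rpow_mul two_pos.le]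
            norm_num
            ring_nf
          have e2 : ((2:ℝ) ^ (j:ℝ) * R) ^ α = (2:ℝ) ^ ((j:ℝ) * α) * R ^ α := by
            rw [Real.mul_rpow (by positivity) hR.le, ← Real.rpow_mul two_pos.le]
          have e3 : q ^ j = (2:ℝ) ^ ((2 - α) * (j:ℝ)) := by
            rw [← Real.rpow_natCast q j, hqdef, ← Real.rpow_mul two_pos.le]
          rw [e1, e2, e3]
          rw [one_div, mul_inv, ← mul_assoc, ← Real.rpow_neg two_pos.le,
            ← Real.rpow_add two_pos]
          rw [div_eq_mul_inv, mul_assoc (256:ℝ),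
            mul_comm ((R ^ α)⁻¹) ((2:ℝ) ^ ((2 - α) * (j:ℝ))), ← mul_assoc]
          congr 1
          rw [show (256:ℝ) = (2:ℝ) ^ ((8:ℕ):ℝ) from by rw [Real.rpow_natCast]; norm_num]
          rw [← Real.rpow_add two_pos]
          congr 1
          push_cast
          ring

  calc ∑ j ∈ S.image J, ∑ x ∈ S.filter (fun x => J x = j), 1 / dist y x ^ α
      ≤ ∑ j ∈ S.image J, (256 / R ^ α) * q ^ j := Finset.sum_le_sum hfiber
    _ = (256 / R ^ α) * ∑ j ∈ S.image J, q ^ j := by rw [Finset.mul_sum]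
    _ ≤ (256 / R ^ α) * (1 - q)⁻¹ := by
        apply mul_le_mul_of_nonneg_left _ (by positivity)
        calc ∑ j ∈ S.image J, q ^ j ≤ ∑' (n : ℕ), q ^ n :=
              Summable.sum_le_tsum _ (fun n _ => by positivity)
                (summable_geometric_of_lt_one hq0.le hq1)
          _ = (1 - q)⁻¹ := tsum_geometric_of_lt_one hq0.le hq1
    _ = (256 * (1 - q)⁻¹) / R ^ α := by ring

lemma greedy_coloring (m : ℕ) (hm : 0 < m) (Conf : Link → Link → Prop)
    (hsymm : ∀ a b, Conf a b → Conf b a) (hirr : ∀ a, ¬Conf a a) :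
    ∀ L : Finset Link, (∀ l ∈ L, (L.filter (fun l' => Conf l l')).card < m) →
    ∃ col : Link → Fin m, ∀ l ∈ L, ∀ l' ∈ L, Conf l l' → col l ≠ col l' := by
  intro L
  induction L using Finset.strongInductionOn with
  | _ L ih =>
    intro hdeg
    rcases L.eq_empty_or_nonempty with rfl | ⟨x, hx⟩
    · exact ⟨fun _ => ⟨0, hm⟩, by simp⟩
    · set L' := L.erase x with hL'
      have hss : L' ⊂ L := Finset.erase_ssubset hx
      have hdeg' : ∀ l ∈ L', (L'.filter (fun l' => Conf l l')).card < m := by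
        intro l hl
        exact lt_of_le_of_lt
          (Finset.card_le_card (Finset.filter_subset_filter _ (Finset.erase_subset x L)))
          (hdeg l (Finset.mem_of_mem_erase hl))
      obtain ⟨col', hcol'⟩ := ih L' hss hdeg'
      set N := (L'.filter (fun l' => Conf x l')).image col' with hN
      have hNcard : N.card < m := by
        calc N.card ≤ (L'.filter (fun l' => Conf x l')).card := Finset.card_image_le
          _ ≤ (L.filter (fun l' => Conf x l')).card :=
              Finset.card_le_card (Finset.filter_subset_filter _ (Finset.erase_subset x L))
          _ < m := hdeg x hx
      have hex : ∃ c : Fin m, c ∉ N := by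
        by_contra hc
        push_neg at hc
        have : (Finset.univ : Finset (Fin m)) ⊆ N := fun c _ => hc c
        have := Finset.card_le_card this
        simp only [Finset.card_univ, Fintype.card_fin] at this
        omega
      obtain ⟨c0, hc0⟩ := hex
      refine ⟨Function.update col' x c0, ?_⟩
      intro l hl l' hl' hconf
      have hne : l ≠ l' := by rintro rfl; exact hirr l hconf
      by_cases h1 : l = x
      · subst h1
        have hl'' : l' ∈ L' := Finset.mem_erase.mpr ⟨Ne.symm hne, hl'⟩
        rw [Function.update_self, Function.update_of_ne (Ne.symm hne)]
        intro heq
        apply hc0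
        rw [heq]
        exact Finset.mem_image_of_mem col' (Finset.mem_filter.mpr ⟨hl'', hconf⟩)
      · by_cases h2 : l' = x
        · subst h2
          have hl'' : l ∈ L' := Finset.mem_erase.mpr ⟨h1, hl⟩
          rw [Function.update_self, Function.update_of_ne h1]
          intro heq
          apply hc0
          rw [← heq]
          exact Finset.mem_image_of_mem col'
            (Finset.mem_filter.mpr ⟨hl'', hsymm _ _ hconf⟩)
        · rw [Function.update_of_ne h1, Function.update_of_ne h2]
          exact hcol' l (Finset.mem_erase.mpr ⟨h1, hl⟩) l'
            (Finset.mem_erase.mpr ⟨h2, hl'⟩) hconf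

section MST
variable {P : Finset Point} {T : SimpleGraph ↥P}

lemma reach_dichotomy (hconn : T.Connected) {a b : ↥P} (hab : T.Adj a b) (v : ↥P) :
    (T.deleteEdges {s(a, b)}).Reachable a v ∨ (T.deleteEdges {s(a, b)}).Reachable b v := by
  set T' := T.deleteEdges {s(a, b)} with hT'
  have step : ∀ {u x : ↥P}, T.Adj u x →
      (T'.Reachable a u ∨ T'.Reachable b u) → (T'.Reachable a x ∨ T'.Reachable b x) := by
    intro u x hux hu
    by_cases he : s(u, x) = s(a, b)
    · rw [Sym2.eq_iff] at he
      rcases he with ⟨rfl, rfl⟩ | ⟨rfl, rfl⟩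
      · exact Or.inr (SimpleGraph.Reachable.refl _)
      · exact Or.inl (SimpleGraph.Reachable.refl _)
    · have hadj : T'.Adj u x := by
        rw [hT', SimpleGraph.deleteEdges_adj]
        exact ⟨hux, by simpa using he⟩
      rcases hu with h | h
      · exact Or.inl (h.trans hadj.reachable)
      · exact Or.inr (h.trans hadj.reachable)
  have key : ∀ (u x : ↥P) (w : T.Walk u x),
      (T'.Reachable a u ∨ T'.Reachable b u) → (T'.Reachable a x ∨ T'.Reachable b x) := by
    intro u x w
    induction w with
    | nil => exact id
    | cons h p ih => intro hu; exact ih (step h hu)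
  obtain ⟨w⟩ := hconn a v
  exact key a v w (Or.inl (SimpleGraph.Reachable.refl _))

lemma sum_sym2_pair {u w : ↥P} (huw : u ≠ w) :
    ∑ p ∈ P.attach, ∑ q ∈ P.attach,
      (if s(p, q) = s(u, w) then dist (p : Point) (q : Point) else 0)
    = 2 * dist (u : Point) (w : Point) := by
  have hsplit : ∀ p q : ↥P,
      (if s(p, q) = s(u, w) then dist (p : Point) (q : Point) else 0)
      = (if p = u then (if q = w then dist (p : Point) (q : Point) else 0) else 0)
        + (if p = w then (if q = u then dist (p : Point) (q : Point) else 0) else 0) := by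
    intro p q
    by_cases h1 : p = u ∧ q = w
    · obtain ⟨rfl, rfl⟩ := h1
      rw [if_pos rfl, if_pos rfl, if_pos rfl, if_neg huw.symm]
      simp
    · by_cases h2 : p = w ∧ q = u
      · obtain ⟨rfl, rfl⟩ := h2
        rw [if_pos (Sym2.eq_iff.mpr (Or.inr ⟨rfl, rfl⟩)), if_neg huw, if_pos rfl, if_pos rfl]
        simp
      · rw [if_neg (fun hc => by rcases Sym2.eq_iff.mp hc with h | h; exacts [h1 h, h2 h])]
        rcases Classical.em (p = u) with rfl | hpu
        · rw [if_pos rfl, if_neg (fun hc => h1 ⟨rfl, hc⟩), if_neg huw]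
          ring
        · rw [if_neg hpu]
          rcases Classical.em (p = w) with rfl | hpw
          · rw [if_pos rfl, if_neg (fun hc => h2 ⟨rfl, hc⟩)]
            ring
          · rw [if_neg hpw]; ring
  calc ∑ p ∈ P.attach, ∑ q ∈ P.attach,
        (if s(p, q) = s(u, w) then dist (p : Point) (q : Point) else 0)
      = ∑ p ∈ P.attach, (∑ q ∈ P.attach,
          (if p = u then (if q = w then dist (p : Point) (q : Point) else 0) else 0)
        + ∑ q ∈ P.attach,
          (if p = w then (if q = u then dist (p : Point) (q : Point) else 0) else 0)) := by
        apply Finset.sum_congr rfl; intro p _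
        rw [← Finset.sum_add_distrib]
        apply Finset.sum_congr rfl; intro q _
        exact hsplit p q
    _ = 2 * dist (u : Point) (w : Point) := by
        rw [Finset.sum_add_distrib]
        have part : ∀ (z z' : ↥P), ∑ p ∈ P.attach, ∑ q ∈ P.attach,
            (if p = z then (if q = z' then dist (p : Point) (q : Point) else 0) else 0)
            = dist (z : Point) (z' : Point) := by
          intro z z'
          have step : ∀ p : ↥P, ∑ q ∈ P.attach,
              (if p = z then (if q = z' then dist (p : Point) (q : Point) else 0) else 0)
              = (if p = z then dist (p : Point) (z' : Point) else 0) := by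
            intro p
            by_cases hp : p = z
            · simp only [if_pos hp]
              rw [Finset.sum_ite_eq' P.attach z' (fun q => dist (p : Point) (q : Point)),
                if_pos (P.mem_attach z')]
            · simp only [if_neg hp, Finset.sum_const_zero]
          rw [Finset.sum_congr rfl (fun p _ => step p),
            Finset.sum_ite_eq' P.attach z (fun p => dist (p : Point) (z' : Point)),
            if_pos (P.mem_attach z)]
        rw [part u w, part w u, dist_comm]
        ring

lemma mst_swap (hmst : IsMST P T) {a b x : ↥P} (hab : T.Adj a b)
    (hx : (T.deleteEdges {s(a, b)}).Reachable b x) (hxa : x ≠ a) :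
    dist (a : Point) (b : Point) ≤ dist (a : Point) (x : Point) := by
  by_cases hxb : x = b
  · subst hxb; exact le_refl _
  set T' := T.deleteEdges {s(a, b)} with hT'
  have hacyc : T.IsAcyclic := hmst.1.IsAcyclic
  have hbridge : ¬ T'.Reachable a b := by
    have := (SimpleGraph.isAcyclic_iff_forall_adj_isBridge.mp hacyc hab)
    exact this
  have hax : ¬ T'.Reachable a x := fun h => hbridge (h.trans hx.symm)
  have hTnotadj : ¬ T.Adj a x := by
    intro h
    apply hax
    apply SimpleGraph.Adj.reachable
    rw [hT', SimpleGraph.deleteEdges_adj]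
    refine ⟨h, ?_⟩
    simp only [Set.mem_singleton_iff, Sym2.eq_iff]
    rintro (⟨-, rfl⟩ | ⟨rfl, rfl⟩)
    · exact hxb rfl
    · exact hxb rfl
  have hanx : a ≠ x := fun h => hxa h.symm
  set T'' := T' ⊔ SimpleGraph.fromEdgeSet {s(a, x)} with hT''
  have hT''ax : T''.Adj a x := by
    rw [hT'', SimpleGraph.sup_adj, SimpleGraph.fromEdgeSet_adj]
    exact Or.inr ⟨Set.mem_singleton _, hanx⟩
  -- connectivity
  have hconn : T''.Connected := by
    rw [SimpleGraph.connected_iff]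
    refine ⟨?_, ⟨a⟩⟩
    have hToA : ∀ v : ↥P, T''.Reachable a v := by
      intro v
      rcases reach_dichotomy hmst.1.isConnected hab v with h | h
      · exact h.mono le_sup_left
      · exact (hT''ax.reachable.trans ((hx.symm.trans h).mono le_sup_left))
    intro u v
    exact (hToA u).symm.trans (hToA v)
  -- acyclicity
  have hacyc'' : T''.IsAcyclic := by
    intro u w hw
    by_cases he : s(a, x) ∈ w.edges
    · have hb : T''.IsBridge s(a, x) := by
        rw [SimpleGraph.isBridge_iff]
        show ¬ (T'' \ SimpleGraph.fromEdgeSet {s(a, x)}).Reachable a x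
        have heq : T'' \ SimpleGraph.fromEdgeSet {s(a, x)} = T' := by
          ext p q
          simp only [SimpleGraph.sdiff_adj, SimpleGraph.sup_adj,
            SimpleGraph.fromEdgeSet_adj, Set.mem_singleton_iff]
          constructor
          · rintro ⟨h1 | h1, h2⟩
            · exact h1
            · exact absurd ⟨h1.1, h1.2⟩ h2
          · intro h1
            refine ⟨Or.inl h1, ?_⟩
            rintro ⟨h2, h3⟩
            apply hax
            have : T'.Adj p q := h1
            rw [Sym2.eq_iff] at h2
            rcases h2 with ⟨rfl, rfl⟩ | ⟨rfl, rfl⟩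
            · exact this.reachable
            · exact this.symm.reachable
        rw [heq]
        exact hax
      rw [SimpleGraph.isBridge_iff_adj_and_forall_cycle_notMem (by exact hT''ax)] at hb
      exact hb w hw he
    · have hsub : ∀ e ∈ w.edges, e ∈ T.edgeSet := by
        intro e hee
        have h1 := w.edges_subset_edgeSet hee
        rw [hT'', SimpleGraph.edgeSet_sup, SimpleGraph.edgeSet_fromEdgeSet] at h1
        rcases h1 with h1 | h1
        · have : T'.edgeSet ⊆ T.edgeSet :=
            SimpleGraph.edgeSet_mono (SimpleGraph.deleteEdges_le _)
          exact this h1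
        · exfalso
          rw [Set.mem_diff, Set.mem_singleton_iff] at h1
          exact he (h1.1 ▸ hee)
      exact hacyc (w.transfer T hsub) (hw.transfer hsub)
  have htree'' : T''.IsTree := ⟨hconn, hacyc''⟩
  -- weight identity
  have hptwise : ∀ p q : ↥P,
      (@ite ℝ (T''.Adj p q) (Classical.propDecidable _) (dist (p : Point) (q : Point)) 0)
      = (@ite ℝ (T.Adj p q) (Classical.propDecidable _) (dist (p : Point) (q : Point)) 0)
        - (if s(p, q) = s(a, b) then dist (p : Point) (q : Point) else 0)
        + (if s(p, q) = s(a, x) then dist (p : Point) (q : Point) else 0) := by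
    intro p q
    have hbneqx : s(a, b) ≠ s(a, x) := by
      intro hcc
      rcases Sym2.eq_iff.mp hcc with ⟨-, h'⟩ | ⟨h1', h2'⟩
      · exact hxb h'.symm
      · exact hTnotadj (h1' ▸ h2' ▸ hab.symm)
    by_cases h1 : s(p, q) = s(a, b)
    · have hTadj : T.Adj p q := by
        rcases Sym2.eq_iff.mp h1 with ⟨rfl, rfl⟩ | ⟨rfl, rfl⟩
        exacts [hab, hab.symm]
      have hT''nadj : ¬ T''.Adj p q := by
        rw [hT'', SimpleGraph.sup_adj, SimpleGraph.fromEdgeSet_adj]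
        rintro (h2 | h2)
        · rw [hT', SimpleGraph.deleteEdges_adj] at h2
          exact h2.2 (by simpa using h1)
        · exact hbneqx (h1 ▸ h2.1)
      rw [if_neg hT''nadj, if_pos hTadj, if_pos h1, if_neg (fun hc => hbneqx (h1.symm.trans hc))]
      ring
    · by_cases h2 : s(p, q) = s(a, x)
      · have hpq : p ≠ q := by
          rcases Sym2.eq_iff.mp h2 with ⟨rfl, rfl⟩ | ⟨rfl, rfl⟩
          exacts [hanx, hanx.symm]
        have hT''adj : T''.Adj p q := by
          rw [hT'', SimpleGraph.sup_adj, SimpleGraph.fromEdgeSet_adj]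
          exact Or.inr ⟨by simpa using h2, hpq⟩
        have hTnadj : ¬ T.Adj p q := by
          intro h3
          rcases Sym2.eq_iff.mp h2 with ⟨rfl, rfl⟩ | ⟨rfl, rfl⟩
          exacts [hTnotadj h3, hTnotadj h3.symm]
        rw [if_pos hT''adj, if_neg hTnadj, if_neg h1, if_pos h2]
        ring
      · have : T''.Adj p q ↔ T.Adj p q := by
          rw [hT'', SimpleGraph.sup_adj, SimpleGraph.fromEdgeSet_adj]
          constructor
          · rintro (h3 | h3)
            · exact (SimpleGraph.deleteEdges_le _ : T' ≤ T) h3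
            · exact absurd h3.1 (by simpa using h2)
          · intro h3
            left
            rw [hT', SimpleGraph.deleteEdges_adj]
            exact ⟨h3, by simpa using h1⟩
        rw [if_neg h1, if_neg h2]
        by_cases h3 : T.Adj p q
        · rw [if_pos h3, if_pos (this.mpr h3)]; ring
        · rw [if_neg h3, if_neg (fun h4 => h3 (this.mp h4))]; ring
  have hweight : treeWeight P T'' = treeWeight P T
      - dist (a : Point) (b : Point) + dist (a : Point) (x : Point) := by
    unfold treeWeight
    have : ∑ p ∈ P.attach, ∑ q ∈ P.attach,
        (@ite ℝ (T''.Adj p q) (Classical.propDecidable _) (dist (p : Point) (q : Point)) 0)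
        = ∑ p ∈ P.attach, ∑ q ∈ P.attach,
            (@ite ℝ (T.Adj p q) (Classical.propDecidable _) (dist (p : Point) (q : Point)) 0)
          - ∑ p ∈ P.attach, ∑ q ∈ P.attach,
            (if s(p, q) = s(a, b) then dist (p : Point) (q : Point) else 0)
          + ∑ p ∈ P.attach, ∑ q ∈ P.attach,
            (if s(p, q) = s(a, x) then dist (p : Point) (q : Point) else 0) := by
      rw [← Finset.sum_sub_distrib, ← Finset.sum_add_distrib]
      apply Finset.sum_congr rfl
      intro p _
      rw [← Finset.sum_sub_distrib, ← Finset.sum_add_distrib]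
      exact Finset.sum_congr rfl (fun q _ => hptwise p q)
    rw [sum_sym2_pair hab.ne, sum_sym2_pair hanx] at this
    linarith [this]
  have := hmst.2 T'' htree''
  rw [hweight] at this
  linarith

lemma mst_pair (hmst : IsMST P T) {a b c d : ↥P} (hab : T.Adj a b) (hcd : T.Adj c d)
    (hne : s(a, b) ≠ s(c, d)) :
    (dist (a : Point) (b : Point) ≤ dist (a : Point) (c : Point) ∧
     dist (a : Point) (b : Point) ≤ dist (a : Point) (d : Point)) ∨
    (dist (a : Point) (b : Point) ≤ dist (b : Point) (c : Point) ∧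
     dist (a : Point) (b : Point) ≤ dist (b : Point) (d : Point)) := by
  set T' := T.deleteEdges {s(a, b)} with hT'
  have hacyc : T.IsAcyclic := hmst.1.IsAcyclic
  have hbridge : ¬ T'.Reachable a b :=
    (SimpleGraph.isAcyclic_iff_forall_adj_isBridge.mp hacyc hab)
  have hcd' : T'.Adj c d := by
    rw [hT', SimpleGraph.deleteEdges_adj]
    exact ⟨hcd, by simpa using (Ne.symm hne)⟩
  rcases reach_dichotomy hmst.1.isConnected hab c with h | h
  · -- c on a-side ⇒ use edge (b,a)
    right
    have hswap : (T.deleteEdges {s(b, a)}).Reachable a c := by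
      rwa [Sym2.eq_swap (a := b) (b := a)]
    have hcb : c ≠ b := by
      rintro rfl
      exact hbridge h
    have hd : (T.deleteEdges {s(b, a)}).Reachable a d := by
      refine hswap.trans ?_
      apply SimpleGraph.Adj.reachable
      rw [Sym2.eq_swap (a := b) (b := a)]
      exact hcd'
    have hdb : d ≠ b := by
      rintro rfl
      exact hbridge (h.trans hcd'.reachable)
    have h1 := mst_swap hmst hab.symm hswap hcb
    have h2 := mst_swap hmst hab.symm hd hdb
    rw [dist_comm (b : Point) (a : Point)] at h1 h2
    exact ⟨h1, h2⟩
  · -- c on b-side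
    left
    have hca : c ≠ a := by
      rintro rfl
      exact hbridge h.symm
    have hd : T'.Reachable b d := h.trans hcd'.reachable
    have hda : d ≠ a := by
      rintro rfl
      exact hbridge hd.symm
    exact ⟨mst_swap hmst hab h hca, mst_swap hmst hab hd hda⟩

end MST

lemma cell_count (t : ℝ) (ht : 0 < t) (E : Finset Link) (sel : Link → Point) (z : Point)
    (hsel : ∀ l ∈ E, sel l = l.1 ∨ sel l = l.2)
    (hlen : ∀ l ∈ E, t < linkLen l ∧ linkLen l ≤ 2 * t)
    (hin : ∀ l ∈ E, dist (sel l) z ≤ t / 4)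
    (hsep : ∀ l ∈ E, ∀ l' ∈ E, l ≠ l' →
      (linkLen l ≤ dist l.1 l'.1 ∧ linkLen l ≤ dist l.1 l'.2) ∨
      (linkLen l ≤ dist l.2 l'.1 ∧ linkLen l ≤ dist l.2 l'.2)) :
    (E.card : ℝ) ≤ 196 := by
  set oth : Link → Point := fun l => if sel l = l.1 then l.2 else l.1 with hoth
  have hne12 : ∀ l ∈ E, l.1 ≠ l.2 := by
    intro l hl h
    have : linkLen l = 0 := by rw [linkLen, h, dist_self]
    linarith [(hlen l hl).1]
  have hothsel : ∀ l ∈ E, oth l = l.1 ∨ oth l = l.2 := by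
    intro l hl
    rw [hoth]; dsimp only; split
    exacts [Or.inr rfl, Or.inl rfl]
  have hlen_oth : ∀ l ∈ E, dist (oth l) (sel l) = linkLen l := by
    intro l hl
    rw [hoth]; dsimp only
    rcases hsel l hl with h | h
    · rw [if_pos h, h, dist_comm]; rfl
    · have hcond : ¬ (sel l = l.1) := by rw [h]; exact fun hc => hne12 l hl hc.symm
      rw [if_neg hcond, h]; rfl
  -- far endpoints are pairwise separated by > t
  have key : ∀ l ∈ E, ∀ l' ∈ E, l ≠ l' → t ≤ dist (oth l) (oth l') := by
    intro l hl l' hl' hne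
    have hd : dist (sel l) (sel l') ≤ t / 2 := by
      calc dist (sel l) (sel l') ≤ dist (sel l) z + dist z (sel l') := dist_triangle _ _ _
        _ ≤ t / 4 + t / 4 := add_le_add (hin l hl) (by rw [dist_comm]; exact hin l' hl')
        _ = t / 2 := by ring
    have htl : t < linkLen l := (hlen l hl).1
    -- witness x from hsep
    rcases hsep l hl l' hl' hne with ⟨h1, h2⟩ | ⟨h1, h2⟩
    · -- witness l.1 : far from both endpoints of l'
      have hxsel : linkLen l ≤ dist l.1 (sel l') := by
        rcases hsel l' hl' with h | h <;> rw [h] <;> assumption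
      have hselne : sel l ≠ l.1 := by
        intro hc
        rw [hc] at hd
        linarith
      have hothl : oth l = l.1 := by
        rw [hoth]; dsimp only; rw [if_neg hselne]
      rw [hothl]
      rcases hothsel l' hl' with h | h <;> rw [h] <;> linarith
    · -- witness l.2
      have hxsel : linkLen l ≤ dist l.2 (sel l') := by
        rcases hsel l' hl' with h | h <;> rw [h] <;> assumption
      have hselne : sel l ≠ l.2 := by
        intro hc
        rw [hc] at hd
        linarith
      have hsel1 : sel l = l.1 := by
        rcases hsel l hl with h | h
        · exact h
        · exact absurd h hselne
      have hothl : oth l = l.2 := by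
        rw [hoth]; dsimp only; rw [if_pos hsel1]
      rw [hothl]
      rcases hothsel l' hl' with h | h <;> rw [h] <;> linarith
  -- ball containment and injectivity, then grid count
  have hball : ∀ l ∈ E, dist (oth l) z ≤ 3 * t := by
    intro l hl
    calc dist (oth l) z ≤ dist (oth l) (sel l) + dist (sel l) z := dist_triangle _ _ _
      _ ≤ 2 * t + t / 4 := add_le_add (by rw [hlen_oth l hl]; exact (hlen l hl).2) (hin l hl)
      _ ≤ 3 * t := by linarith
  have hinj : Set.InjOn oth E := by
    intro l hl l' hl' heq
    by_contra hne
    have := key l hl l' hl' hne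
    rw [heq, dist_self] at this
    linarith
  have hcard : E.card = (E.image oth).card := (Finset.card_image_of_injOn hinj).symm
  rw [hcard]
  have hgc := grid_card z (3 * t) (t / 2) t (by linarith)
    (by nlinarith [Real.sq_sqrt (by norm_num : (0:ℝ) ≤ 2), Real.sqrt_nonneg 2,
      Real.sqrt_le_sqrt (by norm_num : (2:ℝ) ≤ 4)])
    (E.image oth)
    (by
      intro x hx
      rw [Finset.mem_image] at hx
      obtain ⟨l, hl, rfl⟩ := hx
      exact hball l hl)
    (by
      intro x hx y hy hxy
      rw [Finset.mem_image] at hx hy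
      obtain ⟨l, hl, rfl⟩ := hx
      obtain ⟨l', hl', rfl⟩ := hy
      exact key l hl l' hl' (fun hc => hxy (hc ▸ rfl)))
  refine le_trans hgc ?_
  have : 2 * (3 * t) / (t / 2) + 2 = 14 := by
    field_simp
    ring
  rw [this]
  norm_num

lemma link_sep {P : Finset Point} {T : SimpleGraph ↥P} (hmst : IsMST P T)
    {L : Finset Link} (hor : IsOrientationOf P T L) :
    ∀ l ∈ L, ∀ l' ∈ L, l ≠ l' →
      (linkLen l ≤ dist l.1 l'.1 ∧ linkLen l ≤ dist l.1 l'.2) ∨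
      (linkLen l ≤ dist l.2 l'.1 ∧ linkLen l ≤ dist l.2 l'.2) := by
  intro l hl l' hl' hne
  obtain ⟨p, q, hadj, hleq⟩ := hor.1 l hl
  obtain ⟨p', q', hadj', hleq'⟩ := hor.1 l' hl'
  have hedne : s(p, q) ≠ s(p', q') := by
    intro hc
    rcases Sym2.eq_iff.mp hc with ⟨rfl, rfl⟩ | ⟨rfl, rfl⟩
    · exact hne (hleq.trans hleq'.symm)
    · apply hor.2.2 p q hadj
      constructor
      · rwa [← hleq]
      · rwa [← hleq']
  have := mst_pair hmst hadj hadj' hedne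
  rw [hleq, hleq']
  simpa [linkLen, hleq] using this

lemma class_facts (l : Link) (h1 : 1 ≤ linkLen l) :
    (2:ℝ) ^ ((⌈Real.logb 2 (linkLen l)⌉ : ℝ)) / 2 < linkLen l ∧
    linkLen l ≤ (2:ℝ) ^ ((⌈Real.logb 2 (linkLen l)⌉ : ℝ)) ∧
    1 ≤ (2:ℝ) ^ ((⌈Real.logb 2 (linkLen l)⌉ : ℝ)) := by
  have hpos : (0:ℝ) < linkLen l := by linarith
  set lg := Real.logb 2 (linkLen l) with hlg
  have hlgnn : 0 ≤ lg := Real.logb_nonneg one_lt_two h1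
  have hexp : (2:ℝ) ^ lg = linkLen l := Real.rpow_logb two_pos (by norm_num) hpos
  refine ⟨?_, ?_, ?_⟩
  · have h2 : (⌈lg⌉ : ℝ) < lg + 1 := Int.ceil_lt_add_one lg
    have h3 : (2:ℝ) ^ ((⌈lg⌉ : ℝ)) < (2:ℝ) ^ (lg + 1) :=
      Real.rpow_lt_rpow_left_iff one_lt_two |>.mpr h2
    rw [Real.rpow_add two_pos, hexp, Real.rpow_one] at h3
    linarith
  · have h2 : lg ≤ (⌈lg⌉ : ℝ) := Int.le_ceil lg
    have h3 := Real.rpow_le_rpow_of_exponent_le one_le_two h2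
    rwa [hexp] at h3
  · have h2 : (0:ℝ) ≤ (⌈lg⌉ : ℝ) := by
      have := Int.ceil_nonneg (α := ℝ) hlgnn
      exact_mod_cast this
    calc (1:ℝ) = (2:ℝ) ^ (0:ℝ) := (Real.rpow_zero 2).symm
      _ ≤ _ := Real.rpow_le_rpow_of_exponent_le one_le_two h2


lemma degree_bound (D : ℝ) (hD : 2 ≤ D) (L : Finset Link)
    (hsep : ∀ l ∈ L, ∀ l' ∈ L, l ≠ l' →
      (linkLen l ≤ dist l.1 l'.1 ∧ linkLen l ≤ dist l.1 l'.2) ∨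
      (linkLen l ≤ dist l.2 l'.1 ∧ linkLen l ≤ dist l.2 l'.2))
    (f : Link → ℤ) (Tl : Link → ℝ)
    (hTl : ∀ l ∈ L, Tl l / 2 < linkLen l ∧ linkLen l ≤ Tl l ∧ 1 ≤ Tl l)
    (hTf : ∀ l l', f l = f l' → Tl l = Tl l')
    (l : Link) (hl : l ∈ L) :
    ((L.filter (fun l' => l ≠ l' ∧ f l = f l' ∧
      (dist l.1 l'.1 < D * Tl l ∨ dist l.1 l'.2 < D * Tl l ∨
       dist l.2 l'.1 < D * Tl l ∨ dist l.2 l'.2 < D * Tl l))).card : ℝ)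
    ≤ 196 * (32 * (D + 1) + 2) ^ 2 := by
  set Tv := Tl l with hTv
  have hTv1 : 1 ≤ Tv := (hTl l hl).2.2
  have hTv0 : 0 < Tv := by linarith
  have hD0 : 0 < D := by linarith
  set R1 := (D + 1) * Tv with hR1
  have hR10 : 0 < R1 := by positivity
  set h : ℝ := Tv / 16 with hh
  have hh0 : 0 < h := by positivity
  set E := L.filter (fun l' => l ≠ l' ∧ f l = f l' ∧
      (dist l.1 l'.1 < D * Tv ∨ dist l.1 l'.2 < D * Tv ∨
       dist l.2 l'.1 < D * Tv ∨ dist l.2 l'.2 < D * Tv)) with hE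
  set sel : Link → Point := fun l' => if dist l'.1 l.1 ≤ R1 then l'.1 else l'.2 with hseldef
  have hselmem : ∀ l', sel l' = l'.1 ∨ sel l' = l'.2 := by
    intro l'
    simp only [hseldef]
    split
    exacts [Or.inl rfl, Or.inr rfl]
  have hlen_l : dist l.1 l.2 ≤ Tv := (hTl l hl).2.1
  have hselball : ∀ l' ∈ E, dist (sel l') l.1 ≤ R1 := by
    intro l' hl'
    rw [hE, Finset.mem_filter] at hl'
    obtain ⟨hl'L, hne, hfeq, hclose⟩ := hl'
    by_cases hc : dist l'.1 l.1 ≤ R1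
    · simp only [hseldef]; rw [if_pos hc]; exact hc
    · simp only [hseldef]; rw [if_neg hc]
      push_neg at hc
      have hDR : D * Tv ≤ R1 := by rw [hR1]; nlinarith
      rcases hclose with h1 | h1 | h1 | h1
      · exfalso; rw [dist_comm] at h1; linarith
      · rw [dist_comm] at h1; linarith
      · exfalso
        have : dist l'.1 l.1 ≤ dist l'.1 l.2 + dist l.2 l.1 := dist_triangle _ _ _
        rw [dist_comm l'.1 l.2] at this
        rw [dist_comm l.2 l.1] at this
        linarith [hR1 ▸ (by nlinarith : D * Tv + Tv ≤ R1)]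
      · have : dist l'.2 l.1 ≤ dist l'.2 l.2 + dist l.2 l.1 := dist_triangle _ _ _
        rw [dist_comm l'.2 l.2] at this
        rw [dist_comm l.2 l.1] at this
        have h2 : D * Tv + Tv ≤ R1 := by rw [hR1]; nlinarith
        linarith
  have hclass : ∀ l' ∈ E, Tv / 2 < linkLen l' ∧ linkLen l' ≤ Tv := by
    intro l' hl'
    rw [hE, Finset.mem_filter] at hl'
    obtain ⟨hl'L, hne, hfeq, -⟩ := hl'
    have := hTl l' hl'L
    have hTeq : Tl l' = Tv := by rw [hTv]; exact (hTf l l' hfeq).symm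
    rw [hTeq] at this
    exact ⟨this.1, this.2.1⟩
  set cellf : Link → ℤ × ℤ := fun l' => (⌊sel l' 0 / h⌋, ⌊sel l' 1 / h⌋) with hcellf
  have hcardsum : E.card = ∑ c ∈ E.image cellf, (E.filter (fun l' => cellf l' = c)).card :=
    Finset.card_eq_sum_card_fiberwise (fun x hx => Finset.mem_image_of_mem cellf hx)
  have hfiber : ∀ c ∈ E.image cellf,
      ((E.filter (fun l' => cellf l' = c)).card : ℝ) ≤ 196 := by
    intro c hc
    obtain ⟨l0, hl0, hcell0⟩ := Finset.mem_image.mp hc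
    apply cell_count (Tv / 2) (by positivity) _ sel (sel l0)
    · intro l' _; exact hselmem l'
    · intro l' hl'f
      have hl'E := Finset.mem_of_mem_filter l' hl'f
      have := hclass l' hl'E
      constructor
      · exact this.1
      · calc linkLen l' ≤ Tv := this.2
          _ = 2 * (Tv / 2) := by ring
    · intro l' hl'f
      rw [Finset.mem_filter] at hl'f
      have hceq : cellf l' = cellf l0 := hl'f.2.trans hcell0.symm
      have hlt := dist_lt_of_cell hh0 (congrArg Prod.fst hceq) (congrArg Prod.snd hceq)
      have hsqrt2 : Real.sqrt 2 ≤ 2 := by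
        nlinarith [Real.sq_sqrt (by norm_num : (0:ℝ) ≤ 2), Real.sqrt_nonneg 2]
      have : Real.sqrt 2 * h ≤ 2 * (Tv / 16) := by
        rw [hh]
        apply mul_le_mul_of_nonneg_right hsqrt2 (by positivity)
      apply le_of_lt
      calc dist (sel l') (sel l0) < Real.sqrt 2 * h := hlt
        _ ≤ 2 * (Tv / 16) := this
        _ ≤ Tv / 2 / 4 := by linarith
    · intro l1 h1 l2 h2 hne
      have h1E := Finset.mem_of_mem_filter l1 h1
      have h2E := Finset.mem_of_mem_filter l2 h2
      rw [hE] at h1E h2E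
      exact hsep l1 (Finset.mem_of_mem_filter l1 h1E) l2 (Finset.mem_of_mem_filter l2 h2E) hne
  have himage : ((E.image cellf).card : ℝ) ≤ (32 * (D + 1) + 2) ^ 2 := by
    have hbox := cellbox_card l.1 R1 h hh0 (E.image cellf) (by
      intro c hc
      obtain ⟨l', hl', rfl⟩ := Finset.mem_image.mp hc
      exact ⟨sel l', hselball l' hl', rfl⟩)
    refine le_trans hbox ?_
    have : 2 * R1 / h + 2 = 32 * (D + 1) + 2 := by
      rw [hR1, hh]
      field_simp
      ring
    rw [this]
  calc (E.card : ℝ) = ∑ c ∈ E.image cellf, ((E.filter (fun l' => cellf l' = c)).card : ℝ) := by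
        rw [hcardsum]; push_cast; rfl
    _ ≤ ∑ _c ∈ E.image cellf, (196:ℝ) := Finset.sum_le_sum hfiber
    _ = ((E.image cellf).card : ℝ) * 196 := by rw [Finset.sum_const, nsmul_eq_mul, mul_comm]
    _ ≤ (32 * (D + 1) + 2) ^ 2 * 196 := by
        apply mul_le_mul_of_nonneg_right himage (by norm_num)
    _ = 196 * (32 * (D + 1) + 2) ^ 2 := by ring

lemma cell_feasible (α β : ℝ) (hα : 2 < α) (hβ : 1 ≤ β) (D Tv : ℝ)
    (hD0 : 0 < D) (hTv0 : 0 < Tv)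
    (hDpow : β * (256 * (1 - (2:ℝ) ^ (2 - α))⁻¹) ≤ D ^ α)
    (cell : Finset Link)
    (hlen : ∀ l ∈ cell, 0 < linkLen l ∧ linkLen l ≤ Tv)
    (hsep4 : ∀ l₁ ∈ cell, ∀ l₂ ∈ cell, l₁ ≠ l₂ →
      D * Tv ≤ dist l₁.1 l₂.1 ∧ D * Tv ≤ dist l₁.1 l₂.2 ∧
      D * Tv ≤ dist l₁.2 l₂.1 ∧ D * Tv ≤ dist l₁.2 l₂.2) :
    FeasibleWith α β cell (fun _ => 1) := by
  intro l hl
  have hα0 : (0:ℝ) < α := by linarith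
  have hβ0 : (0:ℝ) < β := by linarith
  set R := D * Tv with hRdef
  have hR0 : 0 < R := by positivity
  set C1 : ℝ := 256 * (1 - (2:ℝ) ^ (2 - α))⁻¹ with hC1def
  -- senders injective on cell.erase l
  have hinj : ∀ x ∈ cell.erase l, ∀ y ∈ cell.erase l, x.1 = y.1 → x = y := by
    intro x hx y hy hxy
    by_contra hne
    have h1 := (hsep4 x (Finset.mem_of_mem_erase hx) y (Finset.mem_of_mem_erase hy) hne).1
    rw [hxy, dist_self] at h1
    linarith
  have hsum : ∑ x ∈ (cell.erase l).image Prod.fst, (1:ℝ) / dist x l.2 ^ α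
      = ∑ l' ∈ cell.erase l, 1 / dist l'.1 l.2 ^ α :=
    Finset.sum_image hinj
  have hintf := interference α hα l.2 R hR0 ((cell.erase l).image Prod.fst)
    (by
      intro x hx x' hx' hne
      obtain ⟨l₁, h₁, rfl⟩ := Finset.mem_image.mp hx
      obtain ⟨l₂, h₂, rfl⟩ := Finset.mem_image.mp hx'
      have hl12 : l₁ ≠ l₂ := fun hc => hne (hc ▸ rfl)
      exact (hsep4 l₁ (Finset.mem_of_mem_erase h₁) l₂ (Finset.mem_of_mem_erase h₂) hl12).1)
    (by
      intro x hx
      obtain ⟨l₁, h₁, rfl⟩ := Finset.mem_image.mp hx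
      have hne : l ≠ l₁ := fun hc => (Finset.ne_of_mem_erase h₁) hc.symm
      exact (hsep4 l hl l₁ (Finset.mem_of_mem_erase h₁) hne).2.2.1)
  have hlenpos : 0 < linkLen l := (hlen l hl).1
  have hlenle : linkLen l ≤ Tv := (hlen l hl).2
  have hlenα : linkLen l ^ α ≤ Tv ^ α :=
    Real.rpow_le_rpow hlenpos.le hlenle hα0.le
  have hlenαpos : 0 < linkLen l ^ α := Real.rpow_pos_of_pos hlenpos _
  have hTvαpos : 0 < Tv ^ α := Real.rpow_pos_of_pos hTv0 _
  have hRα : R ^ α = D ^ α * Tv ^ α := by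
    rw [hRdef, Real.mul_rpow hD0.le hTv0.le]
  have hRαpos : 0 < R ^ α := Real.rpow_pos_of_pos hR0 _
  have hC1pos : 0 < C1 := by
    rw [hC1def]
    have h1 : (2:ℝ) ^ (2 - α) < 1 :=
      Real.rpow_lt_one_of_one_lt_of_neg one_lt_two (by linarith)
    have : 0 < 1 - (2:ℝ) ^ (2 - α) := by linarith
    positivity
  have hchain : β * (C1 / R ^ α) ≤ 1 / linkLen l ^ α := by
    rw [mul_div_assoc'] -- β * C1 / R^α
    rw [div_le_div_iff₀ hRαpos hlenαpos]
    calc β * C1 * linkLen l ^ α ≤ D ^ α * Tv ^ α := by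
          apply mul_le_mul hDpow hlenα hlenαpos.le (Real.rpow_nonneg hD0.le _)
      _ = R ^ α := hRα.symm
      _ = 1 * R ^ α := (one_mul _).symm
  calc β * ∑ l' ∈ cell.erase l, (fun _ => (1:ℝ)) l' / dist l'.1 l.2 ^ α
      = β * ∑ x ∈ (cell.erase l).image Prod.fst, 1 / dist x l.2 ^ α := by
        rw [hsum]
    _ ≤ β * (C1 / R ^ α) := by
        apply mul_le_mul_of_nonneg_left _ hβ0.le
        calc ∑ x ∈ (cell.erase l).image Prod.fst, 1 / dist x l.2 ^ α
            = ∑ x ∈ (cell.erase l).image Prod.fst, 1 / dist l.2 x ^ α := by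
              apply Finset.sum_congr rfl
              intro x _
              rw [dist_comm]
          _ ≤ C1 / R ^ α := hintf
    _ ≤ 1 / linkLen l ^ α := hchain

/-- if all MST edges have length at least `1`, any orientation
of the MST can be partitioned into at most `c·g` sets each SINR-feasible with
one common power (uniform power), where
`g = |{⌈log₂ ℓ⌉ : ℓ an MST edge length}|` is the length diversity and
`c = c(α, β)`. -/
theorem uniform_power_length_diversity_bound (α β : ℝ) (hα : 2 < α) (hβ : 1 ≤ β) :
    ∃ c : ℝ, 0 < c ∧
      ∀ (P : Finset Point) (T : SimpleGraph ↥P), IsMST P T →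
        ∀ L : Finset Link, IsOrientationOf P T L →
          (∀ l ∈ L, 1 ≤ linkLen l) →
          ∃ (k : ℕ) (S : Fin k → Finset Link),
            (k : ℝ) ≤ c * ((L.image fun l => ⌈Real.logb 2 (linkLen l)⌉).card : ℝ) ∧
            IsPartition L S ∧
            ∀ i, ∃ W : ℝ, 0 < W ∧ FeasibleWith α β (S i) (fun _ => W) := by
  have hα0 : (0:ℝ) < α := by linarith
  have hq0 : 0 < (2:ℝ) ^ (2 - α) := Real.rpow_pos_of_pos two_pos _
  have hq1 : (2:ℝ) ^ (2 - α) < 1 :=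
    Real.rpow_lt_one_of_one_lt_of_neg one_lt_two (by linarith)
  set C1 : ℝ := 256 * (1 - (2:ℝ) ^ (2 - α))⁻¹ with hC1def
  have hC1pos : 0 < C1 := by
    have : 0 < 1 - (2:ℝ) ^ (2 - α) := by linarith
    positivity
  have hβ0 : (0:ℝ) < β := by linarith
  set D : ℝ := max 2 ((β * C1) ^ (α⁻¹)) with hDdef
  have hD2 : (2:ℝ) ≤ D := le_max_left _ _
  have hD0 : (0:ℝ) < D := by linarith
  have hDpow : β * C1 ≤ D ^ α := by
    have hbc : (0:ℝ) < β * C1 := by positivity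
    have h1 : ((β * C1) ^ (α⁻¹)) ^ α = β * C1 := by
      rw [← Real.rpow_mul hbc.le, inv_mul_cancel₀ hα0.ne', Real.rpow_one]
    calc β * C1 = ((β * C1) ^ (α⁻¹)) ^ α := h1.symm
      _ ≤ D ^ α := Real.rpow_le_rpow (Real.rpow_nonneg hbc.le _) (le_max_right _ _) hα0.le
  set m : ℕ := ⌈(196:ℝ) * (32 * (D + 1) + 2) ^ 2⌉₊ + 1 with hmdef
  have hm0 : 0 < m := Nat.succ_pos _
  refine ⟨(m : ℝ), by positivity, ?_⟩
  intro P T hmst L hor hlen1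
  have hsep := link_sep hmst hor
  set f : Link → ℤ := fun l => ⌈Real.logb 2 (linkLen l)⌉ with hfdef
  set Tl : Link → ℝ := fun l => (2:ℝ) ^ ((f l : ℝ)) with hTldef
  have hTl : ∀ l ∈ L, Tl l / 2 < linkLen l ∧ linkLen l ≤ Tl l ∧ 1 ≤ Tl l := by
    intro l hl
    exact class_facts l (hlen1 l hl)
  have hTf : ∀ l l', f l = f l' → Tl l = Tl l' := by
    intro l l' hfeq
    simp only [hTldef, hfeq]
  set Conf : Link → Link → Prop := fun l l' => l ≠ l' ∧ f l = f l' ∧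
      (dist l.1 l'.1 < D * Tl l ∨ dist l.1 l'.2 < D * Tl l ∨
       dist l.2 l'.1 < D * Tl l ∨ dist l.2 l'.2 < D * Tl l) with hConfdef
  have hsymm : ∀ a b, Conf a b → Conf b a := by
    rintro a b ⟨h1, h2, h3⟩
    refine ⟨h1.symm, h2.symm, ?_⟩
    have hT : Tl b = Tl a := hTf b a h2.symm
    rw [hT]
    rcases h3 with h | h | h | h
    · exact Or.inl (by rwa [dist_comm])
    · exact Or.inr (Or.inr (Or.inl (by rwa [dist_comm])))
    · exact Or.inr (Or.inl (by rwa [dist_comm]))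
    · exact Or.inr (Or.inr (Or.inr (by rwa [dist_comm])))
  have hirr : ∀ a, ¬ Conf a a := fun a h => h.1 rfl
  have hdegm : ∀ l ∈ L,
      (@Finset.filter Link (fun l' => Conf l l')
        (fun l' => Classical.propDecidable _) L).card < m := by
    intro l hl
    have h1 := degree_bound D hD2 L hsep f Tl hTl hTf l hl
    have hEq : (@Finset.filter Link (fun l' => Conf l l')
        (fun l' => Classical.propDecidable _) L)
        = L.filter (fun l' => l ≠ l' ∧ f l = f l' ∧
          (dist l.1 l'.1 < D * Tl l ∨ dist l.1 l'.2 < D * Tl l ∨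
           dist l.2 l'.1 < D * Tl l ∨ dist l.2 l'.2 < D * Tl l)) := by
      ext l'
      simp only [Finset.mem_filter, hConfdef]
    rw [hEq]
    have h2 : ((L.filter (fun l' => l ≠ l' ∧ f l = f l' ∧
        (dist l.1 l'.1 < D * Tl l ∨ dist l.1 l'.2 < D * Tl l ∨
         dist l.2 l'.1 < D * Tl l ∨ dist l.2 l'.2 < D * Tl l))).card : ℝ)
        ≤ ((⌈(196:ℝ) * (32 * (D + 1) + 2) ^ 2⌉₊ : ℕ) : ℝ) := le_trans h1 (Nat.le_ceil _)
    have h3 := Nat.cast_le.mp h2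
    omega
  obtain ⟨col, hcol⟩ := greedy_coloring m hm0 Conf hsymm hirr L hdegm
  set I := L.image f with hIdef
  set g := I.card with hgdef
  set e : Fin g → ℤ := fun a => ((I.equivFin.symm a : ↥I) : ℤ) with hedef
  have heinj : Function.Injective e := by
    intro a b hab
    exact I.equivFin.symm.injective (Subtype.ext hab)
  refine ⟨g * m, fun idx => L.filter (fun l =>
      f l = e (finProdFinEquiv.symm idx).1 ∧ col l = (finProdFinEquiv.symm idx).2),
      ?_, ⟨?_, ?_, ?_⟩, ?_⟩
  · exact le_of_eq (by push_cast; ring)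
  · intro i
    exact Finset.filter_subset _ _
  · -- cover
    intro l hl
    have hfl : f l ∈ I := Finset.mem_image_of_mem f hl
    refine ⟨finProdFinEquiv (I.equivFin ⟨f l, hfl⟩, col l), ?_⟩
    rw [Finset.mem_filter]
    refine ⟨hl, ?_, ?_⟩
    · rw [Equiv.symm_apply_apply]
      simp only [hedef, Equiv.symm_apply_apply]
    · rw [Equiv.symm_apply_apply]
  · -- disjoint
    intro i j hij
    rw [Finset.disjoint_left]
    intro l hli hlj
    rw [Finset.mem_filter] at hli hlj
    apply hij
    have h1 : (finProdFinEquiv.symm i).1 = (finProdFinEquiv.symm j).1 :=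
      heinj (hli.2.1.symm.trans hlj.2.1)
    have h2 : (finProdFinEquiv.symm i).2 = (finProdFinEquiv.symm j).2 :=
      hli.2.2.symm.trans hlj.2.2
    exact finProdFinEquiv.symm.injective (Prod.ext h1 h2)
  · -- feasibility
    intro idx
    refine ⟨1, one_pos, ?_⟩
    have hTv0 : (0:ℝ) < (2:ℝ) ^ ((e (finProdFinEquiv.symm idx).1 : ℤ) : ℝ) :=
      Real.rpow_pos_of_pos two_pos _
    apply cell_feasible α β hα hβ D ((2:ℝ) ^ ((e (finProdFinEquiv.symm idx).1 : ℤ) : ℝ))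
      hD0 hTv0 (by rw [← hC1def]; exact hDpow)
    · intro l hl
      rw [Finset.mem_filter] at hl
      obtain ⟨hlL, hfv, hcv⟩ := hl
      have h1 := hTl l hlL
      have hTveq : Tl l = (2:ℝ) ^ ((e (finProdFinEquiv.symm idx).1 : ℤ) : ℝ) := by
        simp only [hTldef]
        rw [hfv]
      constructor
      · linarith [hlen1 l hlL]
      · rw [← hTveq]; exact h1.2.1
    · intro l₁ h₁ l₂ h₂ hne
      rw [Finset.mem_filter] at h₁ h₂
      obtain ⟨h₁L, hf₁, hc₁⟩ := h₁
      obtain ⟨h₂L, hf₂, hc₂⟩ := h₂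
      have hfeq : f l₁ = f l₂ := hf₁.trans hf₂.symm
      have hnoconf : ¬ Conf l₁ l₂ := by
        intro hc
        exact hcol l₁ h₁L l₂ h₂L hc (hc₁.trans hc₂.symm)
      have hT1 : Tl l₁ = (2:ℝ) ^ ((e (finProdFinEquiv.symm idx).1 : ℤ) : ℝ) := by
        simp only [hTldef]
        rw [hf₁]
      simp only [hConfdef, not_and, not_or, not_lt] at hnoconf
      have h4 := hnoconf hne hfeq
      rw [hT1] at h4
      exact ⟨h4.1, h4.2.1, h4.2.2.1, h4.2.2.2⟩
end
end
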